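/- There exist λ > 0 and a function f : {0,...,N} → ℝ such that f is strictly decreasing, f(0) = 1, f(N) = 0, and Gf = -λf. -/

import Mathlib

open Matrix Polynomial Finset

/-- Generator of a birth-and-death chain on `{0,...,N}`:
`Gf(x) = b_{x+1}(f(x+1)-f(x)) + d_x(f(x-1)-f(x))`, with the conventions
`b_{N+1} = 0` (built in via the `if x < N` in the diagonal term; there is no
state `N+1`) and `d 0 = 0` (imposed as a hypothesis in the theorems). -/
def bdGen (N : ℕ) (b d : ℕ → ℝ) : Matrix (Fin (N+1)) (Fin (N+1)) ℝ :=
  Matrix.of fun x y =>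
    if (y : ℕ) = (x : ℕ) + 1 then b ((x : ℕ) + 1)
    else if (y : ℕ) + 1 = (x : ℕ) then d (x : ℕ)
    else if y = x then -((if (x : ℕ) < N then b ((x : ℕ) + 1) else 0) + d (x : ℕ))
    else 0

/-- There exist `λ > 0` and `f` strictly decreasing with `f(0) = 1`, `f(N) = 0`
and `Gf = -λ f`. -/


noncomputable def bdP (b d : ℕ → ℝ) (lam : ℝ) : ℕ → ℝ × ℝ
  | 0 => (1, 1 - lam / b 1)
  | x + 1 =>
    ((bdP b d lam x).2,
      (bdP b d lam x).2 +
        (d (x + 1) * ((bdP b d lam x).2 - (bdP b d lam x).1)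
          - lam * (bdP b d lam x).2) / b (x + 2))

noncomputable def bdF (b d : ℕ → ℝ) (lam : ℝ) (x : ℕ) : ℝ := (bdP b d lam x).1

lemma bdF_zero (b d : ℕ → ℝ) (lam : ℝ) : bdF b d lam 0 = 1 := rfl

lemma bdF_one (b d : ℕ → ℝ) (lam : ℝ) : bdF b d lam 1 = 1 - lam / b 1 := rfl

lemma bdF_succ (b d : ℕ → ℝ) (lam : ℝ) (x : ℕ) :
    bdF b d lam (x + 2) = bdF b d lam (x + 1) +
      (d (x + 1) * (bdF b d lam (x + 1) - bdF b d lam x)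
        - lam * bdF b d lam (x + 1)) / b (x + 2) := rfl

lemma flux_zero (b d : ℕ → ℝ) (lam : ℝ) (hb1 : b 1 ≠ 0) :
    b 1 * (bdF b d lam 0 - bdF b d lam 1) = lam := by
  rw [bdF_zero, bdF_one]; field_simp; ring

lemma flux_succ (b d : ℕ → ℝ) (lam : ℝ) (x : ℕ) (hb : b (x + 2) ≠ 0) :
    b (x + 2) * (bdF b d lam (x + 1) - bdF b d lam (x + 2))
      = lam * bdF b d lam (x + 1)
        + d (x + 1) * (bdF b d lam x - bdF b d lam (x + 1)) := by
  rw [bdF_succ]; field_simp; ring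

lemma bdP_cont (b d : ℕ → ℝ) (x : ℕ) : Continuous fun lam => bdP b d lam x := by
  induction x with
  | zero =>
      simp only [bdP]
      exact continuous_const.prodMk (continuous_const.sub (continuous_id.div_const _))
  | succ n ih =>
      have h1 : Continuous fun lam => (bdP b d lam n).1 := continuous_fst.comp ih
      have h2 : Continuous fun lam => (bdP b d lam n).2 := continuous_snd.comp ih
      simp only [bdP]
      exact h2.prodMk (h2.add (((continuous_const.mul (h2.sub h1)).sub
        (continuous_id.mul h2)).div_const _))

lemma bdF_cont (b d : ℕ → ℝ) (x : ℕ) : Continuous fun lam => bdF b d lam x :=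
  continuous_fst.comp (bdP_cont b d x)

lemma bdP_zero_lam (b d : ℕ → ℝ) (x : ℕ) : bdP b d 0 x = (1, 1) := by
  induction x with
  | zero => simp [bdP]
  | succ n ih => simp [bdP, ih]

lemma bdF_zero_lam (b d : ℕ → ℝ) (x : ℕ) : bdF b d 0 x = 1 := by
  simp [bdF, bdP_zero_lam]

lemma fluxPos (N : ℕ) (hN : 1 ≤ N) (b d : ℕ → ℝ)
    (hb : ∀ x, 1 ≤ x → x ≤ N → 0 < b x)
    (hd : ∀ x, 1 ≤ x → x ≤ N - 1 → 0 < d x)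
    (lam : ℝ) (hlam : 0 < lam) :
    ∀ x, x + 1 ≤ N → (∀ y, y ≤ x → 0 < bdF b d lam y) →
      0 < b (x + 1) * (bdF b d lam x - bdF b d lam (x + 1)) := by
  intro x
  induction x with
  | zero =>
      intro _ _
      rw [flux_zero b d lam (ne_of_gt (hb 1 le_rfl hN))]
      exact hlam
  | succ n ih =>
      intro hxN hpos
      rw [flux_succ b d lam n (ne_of_gt (hb (n + 2) (by omega) hxN))]
      have h1 : 0 < lam * bdF b d lam (n + 1) := mul_pos hlam (hpos (n + 1) le_rfl)
      have h2 : 0 < b (n + 1) := hb (n + 1) (by omega) (by omega)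
      have h3 : 0 < b (n + 1) * (bdF b d lam n - bdF b d lam (n + 1)) :=
        ih (by omega) (fun y hy => hpos y (by omega))
      have hdpos : 0 < d (n + 1) := hd (n + 1) (by omega) (by omega)
      have h4 : 0 < bdF b d lam n - bdF b d lam (n + 1) := by
        rcases mul_pos_iff.mp h3 with ⟨_, h⟩ | ⟨h, _⟩
        · exact h
        · linarith
      nlinarith

theorem stmt2 (N : ℕ) (hN : 1 ≤ N) (b d : ℕ → ℝ)
    (hb : ∀ x, 1 ≤ x → x ≤ N → 0 < b x)
    (hd : ∀ x, 1 ≤ x → x ≤ N - 1 → 0 < d x)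
    (hd0 : d 0 = 0) (hdN : d N = 0) :
    ∃ (lam : ℝ) (f : Fin (N+1) → ℝ), 0 < lam ∧ StrictAnti f ∧
      f 0 = 1 ∧ f (Fin.last N) = 0 ∧
      (bdGen N b d).mulVec f = -lam • f := by
  classical
  have hb1 : (0:ℝ) < b 1 := hb 1 le_rfl hN
  set S : Set ℝ := {l | 0 ≤ l ∧ ∃ x ≤ N, bdF b d l x ≤ 0} with hS
  have hSclosed : IsClosed S := by
    have hrepr : S = Set.Ici (0:ℝ) ∩ ⋃ x ∈ Finset.range (N+1), {l | bdF b d l x ≤ 0} := by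
      ext l
      simp only [hS, Set.mem_setOf_eq, Set.mem_inter_iff, Set.mem_Ici, Set.mem_iUnion,
        Finset.mem_range, Nat.lt_succ_iff, exists_prop]
    rw [hrepr]
    exact isClosed_Ici.inter (isClosed_biUnion_finset fun x _ =>
      isClosed_le (bdF_cont b d x) continuous_const)
  have hSne : S.Nonempty := by
    refine ⟨b 1, hb1.le, 1, hN, ?_⟩
    rw [bdF_one, div_self hb1.ne']
    norm_num
  have hSbdd : BddBelow S := ⟨0, fun l hl => hl.1⟩
  set lam : ℝ := sInf S with hlamdef
  have hmem : lam ∈ S := hSclosed.csInf_mem hSne hSbdd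
  have hlam0 : 0 < lam := by
    rcases hmem with ⟨hge, x, hxN, hle⟩
    rcases lt_or_eq_of_le hge with h | h
    · exact h
    · exfalso; rw [← h] at hle; rw [bdF_zero_lam] at hle; linarith
  -- nonnegativity at lam
  have hnonneg : ∀ x ≤ N, 0 ≤ bdF b d lam x := by
    by_contra hcon
    push_neg at hcon
    obtain ⟨x, hxN, hneg⟩ := hcon
    have hc := (bdF_cont b d x).continuousAt (x := lam)
    rw [Metric.continuousAt_iff] at hc
    obtain ⟨δ, hδ, hball⟩ := hc (-(bdF b d lam x)) (by linarith)
    set l : ℝ := max 0 (lam - δ / 2) with hl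
    have hl0 : (0:ℝ) ≤ l := le_max_left _ _
    have hll : l < lam := max_lt hlam0 (by linarith)
    have hdist : dist l lam < δ := by
      rw [Real.dist_eq, abs_of_nonpos (by linarith)]
      have h2 : lam - δ / 2 ≤ l := le_max_right _ _
      linarith
    have hfl : bdF b d l x ≤ 0 := by
      have := hball hdist
      rw [Real.dist_eq] at this
      have := abs_lt.mp this
      linarith [this.2]
    exact absurd (csInf_le hSbdd ⟨hl0, x, hxN, hfl⟩) (not_le.mpr hll)
  have hex : ∃ x, bdF b d lam x ≤ 0 := by
    obtain ⟨x, hxN, hle⟩ := hmem.2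
    exact ⟨x, hle⟩
  obtain ⟨x0, hx0spec, hltpos⟩ :
      ∃ k, bdF b d lam k ≤ 0 ∧ ∀ y, y < k → 0 < bdF b d lam y :=
    ⟨Nat.find hex, Nat.find_spec hex, fun y hy => lt_of_not_ge (Nat.find_min hex hy)⟩
  obtain ⟨xw, hxwN, hxwle⟩ := hmem.2
  have hx0le : x0 ≤ N := by
    by_contra hcon
    exact absurd (hltpos xw (by omega)) (not_lt.mpr hxwle)
  have hx0eq : bdF b d lam x0 = 0 := le_antisymm hx0spec (hnonneg x0 hx0le)
  have hx01 : 1 ≤ x0 := by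
    by_contra h
    have : x0 = 0 := by omega
    rw [this, bdF_zero] at hx0eq
    norm_num at hx0eq
  have hx0N : x0 = N := by
    by_contra h
    have hx0lt : x0 < N := lt_of_le_of_ne hx0le h
    obtain ⟨n, hn⟩ : ∃ n, x0 = n + 1 := ⟨x0 - 1, by omega⟩
    rw [hn] at hx0eq hx0lt
    have hfn : 0 < bdF b d lam n := hltpos n (by omega)
    have hbn2 : 0 < b (n + 2) := hb (n + 2) (by omega) (by omega)
    have hdn1 : 0 < d (n + 1) := hd (n + 1) (by omega) (by omega)
    have hfs := flux_succ b d lam n hbn2.ne'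
    rw [hx0eq] at hfs
    have hprod : 0 < d (n + 1) * bdF b d lam n := mul_pos hdn1 hfn
    have hneg : bdF b d lam (n + 2) < 0 := by nlinarith [hfs, hprod, hbn2]
    exact absurd (hnonneg (n + 2) (by omega)) (not_le.mpr hneg)
  -- strict decrease
  have hdec : ∀ x, x + 1 ≤ N → bdF b d lam (x + 1) < bdF b d lam x := by
    intro x hx
    have hpos : ∀ y, y ≤ x → 0 < bdF b d lam y := by
      intro y hy
      exact hltpos y (by omega)
    have h1 := fluxPos N hN b d hb hd lam hlam0 x hx hpos
    have h2 : 0 < b (x + 1) := hb (x + 1) (by omega) (by omega)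
    rcases mul_pos_iff.mp h1 with ⟨_, h⟩ | ⟨h, _⟩
    · linarith
    · linarith
  have hmono : ∀ n, n ≤ N → ∀ m, m < n → bdF b d lam n < bdF b d lam m := by
    intro n
    induction n with
    | zero => intro _ m hm; omega
    | succ k ih =>
        intro hkN m hm
        have h1 : bdF b d lam (k + 1) < bdF b d lam k := hdec k hkN
        rcases Nat.lt_succ_iff_lt_or_eq.mp hm with h | h
        · exact lt_trans h1 (ih (by omega) m h)
        · rw [h]; exact h1
  set g : Fin (N+1) → ℝ := fun i => bdF b d lam i with hg
  have hanti : StrictAnti g := by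
    intro i j hij
    exact hmono j (Nat.lt_succ_iff.mp j.isLt) i hij
  have hg0 : g 0 = 1 := by
    show bdF b d lam ((0 : Fin (N+1)) : ℕ) = 1
    rw [Fin.val_zero, bdF_zero]
  have hgN : g (Fin.last N) = 0 := by
    show bdF b d lam ((Fin.last N : Fin (N+1)) : ℕ) = 0
    rw [Fin.val_last, ← hx0N, hx0eq]
  refine ⟨lam, g, hlam0, hanti, hg0, hgN, ?_⟩
  funext x
  show ∑ y, bdGen N b d x y * g y = (-lam • g) x
  have hrhs : (-lam • g) x = -lam * g x := rfl
  rw [hrhs]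
  obtain ⟨xv, hxv⟩ := x
  rcases Nat.lt_or_ge xv N with hxN | hxN
  · rcases Nat.eq_zero_or_pos xv with rfl | hxpos
    · -- case x = 0
      have hrow : ∀ y : Fin (N+1), bdGen N b d ⟨0, hxv⟩ y * g y =
          (if y = (⟨1, by omega⟩ : Fin (N+1)) then b 1 * g y else 0) +
          (if y = (⟨0, hxv⟩ : Fin (N+1)) then (-(b 1 + d 0)) * g y else 0) := by
        rintro ⟨yv, hyv⟩
        simp only [bdGen, Matrix.of_apply, Fin.mk.injEq, Fin.val_mk, zero_add]
        split_ifs <;> first | ring1 | (exfalso; omega) | (exact (‹False›).elim)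
      simp only [hrow]
      rw [Finset.sum_add_distrib, Finset.sum_ite_eq' Finset.univ, Finset.sum_ite_eq' Finset.univ]
      simp only [Finset.mem_univ, if_true]
      have hfz := flux_zero b d lam hb1.ne'
      rw [bdF_zero] at hfz
      have h1 : g (⟨1, by omega⟩ : Fin (N+1)) = bdF b d lam 1 := rfl
      have h0 : g (⟨0, hxv⟩ : Fin (N+1)) = 1 := by
        show bdF b d lam 0 = 1; exact bdF_zero b d lam
      rw [h1, h0, hd0]
      nlinarith [hfz]
    · -- case 0 < x < N
      obtain ⟨n, rfl⟩ : ∃ n, xv = n + 1 := ⟨xv - 1, by omega⟩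
      have hrow : ∀ y : Fin (N+1), bdGen N b d ⟨n + 1, hxv⟩ y * g y =
          (if y = (⟨n + 2, by omega⟩ : Fin (N+1)) then b (n + 2) * g y else 0) +
          (if y = (⟨n, by omega⟩ : Fin (N+1)) then d (n + 1) * g y else 0) +
          (if y = (⟨n + 1, hxv⟩ : Fin (N+1)) then (-(b (n + 2) + d (n + 1))) * g y else 0) := by
        rintro ⟨yv, hyv⟩
        simp only [bdGen, Matrix.of_apply, Fin.mk.injEq, Fin.val_mk]
        split_ifs <;> first | ring1 | (exfalso; omega) | (exact (‹False›).elim)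
      simp only [hrow]
      rw [Finset.sum_add_distrib, Finset.sum_add_distrib, Finset.sum_ite_eq' Finset.univ,
        Finset.sum_ite_eq' Finset.univ, Finset.sum_ite_eq' Finset.univ]
      simp only [Finset.mem_univ, if_true]
      have hbn2 : 0 < b (n + 2) := hb (n + 2) (by omega) (by omega)
      have hfs := flux_succ b d lam n hbn2.ne'
      have e1 : g (⟨n + 2, by omega⟩ : Fin (N+1)) = bdF b d lam (n + 2) := rfl
      have e2 : g (⟨n, by omega⟩ : Fin (N+1)) = bdF b d lam n := rfl
      have e3 : g (⟨n + 1, hxv⟩ : Fin (N+1)) = bdF b d lam (n + 1) := rfl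
      rw [e1, e2, e3]
      linear_combination -hfs
  · -- case x = N
    have hxvN : xv = N := by omega
    have hrow : ∀ y : Fin (N+1), bdGen N b d ⟨xv, hxv⟩ y * g y = 0 := by
      rintro ⟨yv, hyv⟩
      simp only [bdGen, Matrix.of_apply, Fin.mk.injEq, Fin.val_mk]
      split_ifs <;> first | (exfalso; omega) | simp [hxvN, hdN] | (exact (‹False›).elim)
    rw [Finset.sum_eq_zero (fun y _ => hrow y)]
    have hgx : g (⟨xv, hxv⟩ : Fin (N+1)) = 0 := by
      show bdF b d lam xv = 0
      rw [hxvN, ← hx0N]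
      exact hx0eq
    rw [hgx]
    ring
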